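/- Let F be a discrete Morse function on a finite CW complex X and let α be an i-cell of X. Then at most one of the following holds: (a) there exists an (i+1)-cell β > α with F(β) ≤ F(α); (b) there exists an (i−1)-cell γ < α with F(γ) ≥ F(α). In other words, the two exceptional sets in the definition of a discrete Morse function cannot both be nonempty for the same cell. -/
import Mathlib


/-- A finite regular cell complex, modeled combinatorially as a finite graded poset of
cells: `face α β` means `α` is a (proper, iterated) face of `β`.  Regularity provides the
diamond property (between a cell and a codimension-two face there are at least two
intermediate cells) and existence of intermediate cells in any interval. -/
structure RegularCellComplex where
  Cell : Type
  [fintypeCell : Fintype Cell]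
  [decEqCell : DecidableEq Cell]
  face : Cell → Cell → Prop
  dim : Cell → ℕ
  face_trans : ∀ {α β γ}, face α β → face β γ → face α γ
  face_dim : ∀ {α β}, face α β → dim α < dim β
  diamond : ∀ {α β}, face α β → dim β = dim α + 2 →
    ∃ δ₁ δ₂, δ₁ ≠ δ₂ ∧ dim δ₁ = dim α + 1 ∧ dim δ₂ = dim α + 1 ∧
      face α δ₁ ∧ face δ₁ β ∧ face α δ₂ ∧ face δ₂ β
  interval : ∀ {α β}, face α β → dim α + 2 ≤ dim β →
    ∃ δ, dim δ = dim α + 1 ∧ face α δ ∧ face δ β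

attribute [instance] RegularCellComplex.fintypeCell RegularCellComplex.decEqCell

/-- `F` is a discrete Morse function (Forman): for each cell there is at most one
coface of dimension one higher with value `≤`, and at most one face of dimension one
lower with value `≥`. -/
def IsDiscreteMorse (X : RegularCellComplex) (F : X.Cell → ℝ) : Prop :=
  ∀ α : X.Cell,
    {β | X.face α β ∧ X.dim β = X.dim α + 1 ∧ F β ≤ F α}.Subsingleton ∧
    {γ | X.face γ α ∧ X.dim γ + 1 = X.dim α ∧ F α ≤ F γ}.Subsingleton

/-- `F` is generic: distinct values on incident cells. -/
def IsGeneric (X : RegularCellComplex) (F : X.Cell → ℝ) : Prop :=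
  ∀ {α β : X.Cell}, X.face α β → F α ≠ F β

/-- `F` is tame: faces of codimension at least two have strictly smaller value. -/
def IsTame (X : RegularCellComplex) (F : X.Cell → ℝ) : Prop :=
  ∀ {α β : X.Cell}, X.face α β → X.dim α + 2 ≤ X.dim β → F α < F β

/-- A cell `α` is critical for `F`: no exceptional coface and no exceptional face. -/
def IsCritical (X : RegularCellComplex) (F : X.Cell → ℝ) (α : X.Cell) : Prop :=
  (¬ ∃ β, X.face α β ∧ X.dim β = X.dim α + 1 ∧ F β ≤ F α) ∧
  (¬ ∃ γ, X.face γ α ∧ X.dim γ + 1 = X.dim α ∧ F α ≤ F γ)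

/-- For a discrete Morse function `F` on a finite regular cell complex and a
cell `α`, the two exceptional conditions cannot both hold: there cannot simultaneously be
a coface `β` of dimension `dim α + 1` with `F β ≤ F α` and a face `γ` of dimension
`dim α − 1` with `F γ ≥ F α`. -/
theorem stmt7 (X : RegularCellComplex) (F : X.Cell → ℝ)
    (hF : IsDiscreteMorse X F) (α : X.Cell) :
    ¬ ((∃ β, X.face α β ∧ X.dim β = X.dim α + 1 ∧ F β ≤ F α) ∧
       (∃ γ, X.face γ α ∧ X.dim γ + 1 = X.dim α ∧ F α ≤ F γ)) := by

  rintro ⟨⟨β, hαβ, hdβ, hFβ⟩, ⟨γ, hγα, hdγ, hFγ⟩⟩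
  have hγβ : X.face γ β := X.face_trans hγα hαβ
  have hdim : X.dim β = X.dim γ + 2 := by omega
  obtain ⟨δ₁, δ₂, hne, hd1, hd2, hγδ₁, hδ₁β, hγδ₂, hδ₂β⟩ := X.diamond hγβ hdim
  have key : ∀ δ, X.face γ δ → X.face δ β → X.dim δ = X.dim γ + 1 → δ ≠ α → False := by
    intro δ hγδ hδβ hdδ hδα
    by_cases h : F β ≤ F δ
    · exact hδα ((hF β).2 ⟨hδβ, by omega, h⟩ ⟨hαβ, by omega, hFβ⟩)
    · have hδγ : F δ ≤ F γ := le_of_lt (lt_of_not_ge (fun hc => h (hFβ.trans (hFγ.trans hc))))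
      exact hδα ((hF γ).1 ⟨hγδ, by omega, hδγ⟩ ⟨hγα, by omega, hFγ⟩)
  by_cases h1 : δ₁ = α
  · exact key δ₂ hγδ₂ hδ₂β hd2 (fun h => hne (h1.trans h.symm))
  · exact key δ₁ hγδ₁ hδ₁β hd1 h1
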